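/- Let α be a nonempty finite type and let μ be a probability distribution on α × Bool × Bool with coordinate random variables A, X, Y. Assume (i) P(A=a) > 0 for every a ∈ α, (ii) A and Y are conditionally independent given X, (iii) X and Y are not independent, and (iv) the noise is label-independent: P(Y=1|X=0) = P(Y=0|X=1). Let p₁ := P(Y=1) and p* := min{ min_a P(Y=1|A=a), 1 − max_a P(Y=1|A=a) }, and assume p* < 1/2. Then P(X=1) lies in uIcc(p₁, (p₁ − p*)/(1 − 2p*)) ∪ uIcc(1 − (p₁ − p*)/(1 − 2p*), 1 − p₁), where uIcc(x, y) denotes the closed interval between x and y irrespective of their order. (Corollary 3: refinement under label-independent noise.) -/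

import Mathlib

open Classical in
/-- Probability of an event `E` under a finitely supported distribution `μ`. -/
noncomputable def pr {Ω : Type*} [Fintype Ω] (μ : Ω → ℝ) (E : Ω → Prop) : ℝ :=
  ∑ ω, if E ω then μ ω else 0

/-- Conditional probability `P(E | F) = P(E ∧ F) / P(F)`. -/
noncomputable def cpr {Ω : Type*} [Fintype Ω] (μ : Ω → ℝ) (E F : Ω → Prop) : ℝ :=
  pr μ (fun ω => E ω ∧ F ω) / pr μ F

section Helpers

variable {Ω : Type*} [Fintype Ω] {μ : Ω → ℝ}

lemma pr_nonneg (hnn : ∀ ω, 0 ≤ μ ω) (E : Ω → Prop) : 0 ≤ pr μ E := by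
  classical
  unfold pr
  refine Finset.sum_nonneg fun ω _ => ?_
  split
  · exact hnn ω
  · exact le_rfl

lemma pr_congr (E F : Ω → Prop) (h : ∀ ω, E ω ↔ F ω) : pr μ E = pr μ F := by
  classical
  unfold pr
  exact Finset.sum_congr rfl fun ω _ => if_congr (h ω) rfl rfl

lemma pr_mono (hnn : ∀ ω, 0 ≤ μ ω) {E F : Ω → Prop} (h : ∀ ω, E ω → F ω) :
    pr μ E ≤ pr μ F := by
  classical
  unfold pr
  refine Finset.sum_le_sum fun ω _ => ?_
  by_cases hE : E ω
  · simp [hE, h ω hE]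
  · simp only [if_neg hE]
    split
    · exact hnn ω
    · exact le_rfl

lemma pr_split (E F : Ω → Prop) :
    pr μ (fun ω => E ω ∧ F ω) + pr μ (fun ω => E ω ∧ ¬ F ω) = pr μ E := by
  classical
  unfold pr
  rw [← Finset.sum_add_distrib]
  refine Finset.sum_congr rfl fun ω _ => ?_
  by_cases hE : E ω <;> by_cases hF : F ω <;> simp [hE, hF]

lemma cpr_mul (hnn : ∀ ω, 0 ≤ μ ω) (E F : Ω → Prop) :
    cpr μ E F * pr μ F = pr μ (fun ω => E ω ∧ F ω) := by
  unfold cpr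
  rcases eq_or_lt_of_le (pr_nonneg hnn F) with h | h
  · have h1 : pr μ (fun ω => E ω ∧ F ω) ≤ pr μ F := pr_mono hnn fun ω hω => hω.2
    have h2 : 0 ≤ pr μ (fun ω => E ω ∧ F ω) := pr_nonneg hnn _
    rw [← h, mul_zero]
    linarith
  · field_simp

lemma cpr_nonneg (hnn : ∀ ω, 0 ≤ μ ω) (E F : Ω → Prop) : 0 ≤ cpr μ E F :=
  div_nonneg (pr_nonneg hnn _) (pr_nonneg hnn _)

lemma cpr_le_one (hnn : ∀ ω, 0 ≤ μ ω) (E F : Ω → Prop) : cpr μ E F ≤ 1 := by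
  unfold cpr
  rcases eq_or_lt_of_le (pr_nonneg hnn F) with h | h
  · rw [← h, div_zero]; norm_num
  · rw [div_le_one h]; exact pr_mono hnn fun ω hω => hω.2

lemma cpr_compl (hnn : ∀ ω, 0 ≤ μ ω) {F : Ω → Prop} (hF : 0 < pr μ F) (E : Ω → Prop) :
    cpr μ E F + cpr μ (fun ω => ¬ E ω) F = 1 := by
  unfold cpr
  rw [← add_div, div_eq_one_iff_eq hF.ne']
  have h := pr_split (μ := μ) F E
  have h1 : pr μ (fun ω => E ω ∧ F ω) = pr μ (fun ω => F ω ∧ E ω) :=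
    pr_congr _ _ fun ω => and_comm
  have h2 : pr μ (fun ω => ¬ E ω ∧ F ω) = pr μ (fun ω => F ω ∧ ¬ E ω) :=
    pr_congr _ _ fun ω => and_comm
  linarith

lemma convex_min_max {e s1 s0 c sa : ℝ} (hs1 : 0 ≤ s1) (hs0 : 0 ≤ s0)
    (hsa : 0 < sa) (hsum : s1 + s0 = sa) (hc : c * sa = (1 - e) * s1 + e * s0) :
    min e (1 - e) ≤ c ∧ c ≤ max e (1 - e) := by
  have m1 := min_le_left e (1 - e)
  have m2 := min_le_right e (1 - e)
  have m3 := le_max_left e (1 - e)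
  have m4 := le_max_right e (1 - e)
  constructor
  · refine le_of_mul_le_mul_right ?_ hsa
    rw [hc, ← hsum]
    nlinarith [mul_nonneg (by linarith : (0:ℝ) ≤ e - min e (1 - e)) hs0,
      mul_nonneg (by linarith : (0:ℝ) ≤ 1 - e - min e (1 - e)) hs1]
  · refine le_of_mul_le_mul_right ?_ hsa
    rw [hc, ← hsum]
    nlinarith [mul_nonneg (by linarith : (0:ℝ) ≤ max e (1 - e) - e) hs0,
      mul_nonneg (by linarith : (0:ℝ) ≤ max e (1 - e) - (1 - e)) hs1]

end Helpers

/-- Corollary 3: refinement under label-independent noise. -/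
theorem stmt4 {α : Type*} [Fintype α] [Nonempty α]
    (μ : α × Bool × Bool → ℝ)
    (hnn : ∀ ω, 0 ≤ μ ω) (hsum : ∑ ω, μ ω = 1)
    (hA : ∀ a : α, 0 < pr μ (fun ω => ω.1 = a))
    (hCI : ∀ (a : α) (y x : Bool), 0 < pr μ (fun ω => ω.2.1 = x) →
      cpr μ (fun ω => ω.1 = a ∧ ω.2.2 = y) (fun ω => ω.2.1 = x) =
        cpr μ (fun ω => ω.1 = a) (fun ω => ω.2.1 = x) *
          cpr μ (fun ω => ω.2.2 = y) (fun ω => ω.2.1 = x))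
    (hdep : ¬ ∀ x y : Bool,
      pr μ (fun ω => ω.2.1 = x ∧ ω.2.2 = y) =
        pr μ (fun ω => ω.2.1 = x) * pr μ (fun ω => ω.2.2 = y))
    (hnoise : cpr μ (fun ω => ω.2.2 = true) (fun ω => ω.2.1 = false) =
              cpr μ (fun ω => ω.2.2 = false) (fun ω => ω.2.1 = true))
    (p₁ pstar : ℝ)
    (hp₁ : p₁ = pr μ (fun ω => ω.2.2 = true))
    (hpstar : pstar =
      min (Finset.univ.inf' Finset.univ_nonempty
            (fun a : α => cpr μ (fun ω => ω.2.2 = true) (fun ω => ω.1 = a)))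
          (1 - Finset.univ.sup' Finset.univ_nonempty
            (fun a : α => cpr μ (fun ω => ω.2.2 = true) (fun ω => ω.1 = a))))
    (hhalf : pstar < 1 / 2) :
    pr μ (fun ω => ω.2.1 = true) ∈
      Set.uIcc p₁ ((p₁ - pstar) / (1 - 2 * pstar)) ∪
        Set.uIcc (1 - (p₁ - pstar) / (1 - 2 * pstar)) (1 - p₁) := by
  classical
  have nn : ∀ E : α × Bool × Bool → Prop, 0 ≤ pr μ E := fun E => pr_nonneg hnn E
  have htrue : pr μ (fun _ => True) = 1 := by
    unfold pr; simpa using hsum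
  have hXsplit : ∀ E : α × Bool × Bool → Prop,
      pr μ (fun ω => E ω ∧ ω.2.1 = true) + pr μ (fun ω => E ω ∧ ω.2.1 = false) = pr μ E := by
    intro E
    have h := pr_split (μ := μ) E (fun ω => ω.2.1 = true)
    have h2 : pr μ (fun ω => E ω ∧ ¬ ω.2.1 = true) = pr μ (fun ω => E ω ∧ ω.2.1 = false) :=
      pr_congr _ _ fun ω => by simp
    linarith
  have hqsum : pr μ (fun ω => ω.2.1 = true) + pr μ (fun ω => ω.2.1 = false) = 1 := by
    have h := hXsplit (fun _ => True)
    have h1 : pr μ (fun ω : α × Bool × Bool => True ∧ ω.2.1 = true) =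
        pr μ (fun ω => ω.2.1 = true) := pr_congr _ _ (by simp)
    have h2 : pr μ (fun ω : α × Bool × Bool => True ∧ ω.2.1 = false) =
        pr μ (fun ω => ω.2.1 = false) := pr_congr _ _ (by simp)
    rw [h1, h2, htrue] at h
    exact h
  -- positivity of P(X = x)
  have hXpos : ∀ x : Bool, 0 < pr μ (fun ω => ω.2.1 = x) := by
    intro x
    rcases (nn (fun ω => ω.2.1 = x)).lt_or_eq with h | h
    · exact h
    exfalso
    apply hdep
    have hx0 : pr μ (fun ω => ω.2.1 = x) = 0 := h.symm
    have hz : ∀ y : Bool, pr μ (fun ω => ω.2.1 = x ∧ ω.2.2 = y) = 0 := by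
      intro y
      have h1 : pr μ (fun ω => ω.2.1 = x ∧ ω.2.2 = y) ≤ pr μ (fun ω => ω.2.1 = x) :=
        pr_mono hnn fun ω hω => hω.1
      have h2 := nn (fun ω => ω.2.1 = x ∧ ω.2.2 = y)
      linarith
    have hother : pr μ (fun ω => ω.2.1 = !x) = 1 := by
      cases x
      · simpa [hx0] using hqsum
      · have := hqsum; rw [hx0] at this; simpa using this
    have hfull : ∀ y : Bool, pr μ (fun ω => ω.2.1 = !x ∧ ω.2.2 = y) =
        pr μ (fun ω => ω.2.2 = y) := by
      intro y
      have h := hXsplit (fun ω => ω.2.2 = y)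
      have e1 : pr μ (fun ω => ω.2.2 = y ∧ ω.2.1 = true) =
          pr μ (fun ω => ω.2.1 = true ∧ ω.2.2 = y) := pr_congr _ _ fun ω => and_comm
      have e2 : pr μ (fun ω => ω.2.2 = y ∧ ω.2.1 = false) =
          pr μ (fun ω => ω.2.1 = false ∧ ω.2.2 = y) := pr_congr _ _ fun ω => and_comm
      rw [e1, e2] at h
      cases x
      · simp only [Bool.not_false]
        have := hz y
        linarith [this, h]
      · simp only [Bool.not_true]
        have := hz y
        linarith [this, h]
    intro x' y
    by_cases hxx : x' = x
    · subst hxx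
      rw [hz y, hx0, zero_mul]
    · have hx' : x' = !x := by
        cases x <;> cases x' <;> first | rfl | exact absurd rfl hxx
      subst hx'
      rw [hfull y, hother, one_mul]
  have hqpos : 0 < pr μ (fun ω => ω.2.1 = true) := hXpos true
  have hqfpos : 0 < pr μ (fun ω => ω.2.1 = false) := hXpos false
  set q := pr μ (fun ω => ω.2.1 = true) with hqdef
  set qf := pr μ (fun ω => ω.2.1 = false) with hqfdef
  set ε := cpr μ (fun ω => ω.2.2 = true) (fun ω => ω.2.1 = false) with hεdef
  have hε0 : 0 ≤ ε := hεdef ▸ cpr_nonneg hnn _ _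
  have hε1 : ε ≤ 1 := hεdef ▸ cpr_le_one hnn _ _
  clear_value q qf ε
  have hδ : cpr μ (fun ω => ω.2.2 = true) (fun ω => ω.2.1 = true) = 1 - ε := by
    have h := cpr_compl hnn (F := fun ω => ω.2.1 = true) (hqdef ▸ hqpos) (fun ω => ω.2.2 = true)
    have h2 : (fun ω : α × Bool × Bool => ¬ ω.2.2 = true) = (fun ω => ω.2.2 = false) :=
      funext fun ω => Bool.not_eq_true _
    rw [h2, ← hnoise] at h
    linarith
  -- p₁ = (1-ε) q + ε qf
  have hp1 : p₁ = (1 - ε) * q + ε * qf := by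
    rw [hp₁]
    have h := hXsplit (fun ω => ω.2.2 = true)
    have e1 := cpr_mul hnn (fun ω : α × Bool × Bool => ω.2.2 = true) (fun ω => ω.2.1 = true)
    have e2 := cpr_mul hnn (fun ω : α × Bool × Bool => ω.2.2 = true) (fun ω => ω.2.1 = false)
    rw [hδ] at e1
    rw [← hεdef] at e2
    rw [← hqdef] at e1
    rw [← hqfdef] at e2
    linarith
  -- per-arm bound
  have hca : ∀ a : α, min ε (1 - ε) ≤ cpr μ (fun ω => ω.2.2 = true) (fun ω => ω.1 = a) ∧
      cpr μ (fun ω => ω.2.2 = true) (fun ω => ω.1 = a) ≤ max ε (1 - ε) := by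
    intro a
    have hsa : 0 < pr μ (fun ω => ω.1 = a) := hA a
    have hs1nn : 0 ≤ pr μ (fun ω => ω.1 = a ∧ ω.2.1 = true) := nn _
    have hs0nn : 0 ≤ pr μ (fun ω => ω.1 = a ∧ ω.2.1 = false) := nn _
    have hsum' := hXsplit (fun ω => ω.1 = a)
    have h := hXsplit (fun ω => ω.1 = a ∧ ω.2.2 = true)
    have e1 := cpr_mul hnn (fun ω : α × Bool × Bool => ω.1 = a ∧ ω.2.2 = true)
      (fun ω => ω.2.1 = true)
    have e2 := cpr_mul hnn (fun ω : α × Bool × Bool => ω.1 = a ∧ ω.2.2 = true)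
      (fun ω => ω.2.1 = false)
    rw [hCI a true true (hqdef ▸ hqpos), hδ] at e1
    rw [hCI a true false (hqfdef ▸ hqfpos), ← hεdef] at e2
    have f1 := cpr_mul hnn (fun ω : α × Bool × Bool => ω.1 = a) (fun ω => ω.2.1 = true)
    have f2 := cpr_mul hnn (fun ω : α × Bool × Bool => ω.1 = a) (fun ω => ω.2.1 = false)
    rw [← hqdef] at e1 f1
    rw [← hqfdef] at e2 f2
    have hnum : pr μ (fun ω => ω.1 = a ∧ ω.2.2 = true) =
        (1 - ε) * pr μ (fun ω => ω.1 = a ∧ ω.2.1 = true) +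
          ε * pr μ (fun ω => ω.1 = a ∧ ω.2.1 = false) := by
      linear_combination -e1 - e2 + (1 - ε) * f1 + ε * f2 - h
    have hnum2 : cpr μ (fun ω => ω.2.2 = true) (fun ω => ω.1 = a) * pr μ (fun ω => ω.1 = a) =
        (1 - ε) * pr μ (fun ω => ω.1 = a ∧ ω.2.1 = true) +
          ε * pr μ (fun ω => ω.1 = a ∧ ω.2.1 = false) := by
      have hcomm : pr μ (fun ω : α × Bool × Bool => ω.2.2 = true ∧ ω.1 = a) =
          pr μ (fun ω => ω.1 = a ∧ ω.2.2 = true) := pr_congr _ _ fun ω => and_comm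
      rw [← hnum, ← hcomm]
      exact cpr_mul hnn _ _
    exact convex_min_max hs1nn hs0nn hsa hsum' hnum2
  have hpmin : min ε (1 - ε) ≤ pstar := by
    rw [hpstar]
    refine le_min (Finset.le_inf' _ _ fun a _ => (hca a).1) ?_
    have hsup : Finset.univ.sup' Finset.univ_nonempty
        (fun a : α => cpr μ (fun ω => ω.2.2 = true) (fun ω => ω.1 = a)) ≤ max ε (1 - ε) :=
      Finset.sup'_le _ _ fun a _ => (hca a).2
    have hmm := min_add_max ε (1 - ε)
    linarith
  have hqf : qf = 1 - q := by linarith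
  rw [hqf] at hp1
  have ht : (0 : ℝ) < 1 - 2 * pstar := by linarith
  rw [Set.mem_union]
  rcases le_total ε (1 / 2) with hc | hc
  · have hεP : ε ≤ pstar := by
      rw [min_eq_left (by linarith : ε ≤ 1 - ε)] at hpmin
      exact hpmin
    left
    rw [Set.mem_uIcc]
    rcases le_total 1 (2 * q) with hs | hs
    · left
      constructor
      · nlinarith [mul_nonneg hε0 (by linarith : (0:ℝ) ≤ 2 * q - 1)]
      · rw [le_div_iff₀ ht]
        nlinarith [mul_nonneg (by linarith : (0:ℝ) ≤ pstar - ε)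
          (by linarith : (0:ℝ) ≤ 2 * q - 1)]
    · right
      constructor
      · rw [div_le_iff₀ ht]
        nlinarith [mul_nonneg (by linarith : (0:ℝ) ≤ pstar - ε)
          (by linarith : (0:ℝ) ≤ 1 - 2 * q)]
      · nlinarith [mul_nonneg hε0 (by linarith : (0:ℝ) ≤ 1 - 2 * q)]
  · have hηP : 1 - ε ≤ pstar := by
      rw [min_eq_right (by linarith : 1 - ε ≤ ε)] at hpmin
      exact hpmin
    right
    rw [Set.mem_uIcc]
    rcases le_total (2 * q) 1 with hs | hs
    · left
      constructor
      · rw [sub_le_comm, le_div_iff₀ ht]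
        nlinarith [mul_nonneg (by linarith : (0:ℝ) ≤ pstar - (1 - ε))
          (by linarith : (0:ℝ) ≤ 1 - 2 * q)]
      · nlinarith [mul_nonneg (by linarith : (0:ℝ) ≤ 1 - ε)
          (by linarith : (0:ℝ) ≤ 1 - 2 * q)]
    · right
      constructor
      · nlinarith [mul_nonneg (by linarith : (0:ℝ) ≤ 1 - ε)
          (by linarith : (0:ℝ) ≤ 2 * q - 1)]
      · rw [le_sub_comm, div_le_iff₀ ht]
        nlinarith [mul_nonneg (by linarith : (0:ℝ) ≤ pstar - (1 - ε))
          (by linarith : (0:ℝ) ≤ 2 * q - 1)]
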